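/- arXiv:0710.2106 — 4 statements merged into one kernel-verified Lean document; each statement's English description precedes it below -/
import Mathlib

section
/- For every real K ≥ 2 and every sufficiently large n, there exists a simple graph G on n vertices such that every induced subgraph of G that is K-nearly regular has at most 7·K·n / log₂ n vertices. -/
open scoped Classical

/-- Degree of `v` in the subgraph of `G` induced on `s`. -/
noncomputable def degOn {V : Type*} (G : SimpleGraph V) (s : Finset V) (v : V) : ℕ :=
  (s.filter (fun w => G.Adj v w)).card

/-- Number of edges of `G` with both endpoints in `s` (the edges of `G[s]`). -/
noncomputable def edgesOn {V : Type*} [Fintype V] (G : SimpleGraph V) (s : Finset V) : ℕ :=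
  (Finset.univ.filter (fun e : Sym2 V => e ∈ G.edgeSet ∧ ∀ v ∈ e, v ∈ s)).card

/-- `G[s]` is `c`-nearly regular: its maximum degree is at most `c` times its minimum degree. -/
def NearlyRegularOn {V : Type*} (G : SimpleGraph V) (s : Finset V) (c : ℝ) : Prop :=
  ∀ v ∈ s, ∀ w ∈ s, (degOn G s v : ℝ) ≤ c * (degOn G s w : ℝ)

set_option maxHeartbeats 4000000 in
/-- For every `K ≥ 2` and every sufficiently large `n` there is a graph on `n` vertices in
which every `K`-nearly regular induced subgraph has at most `7 K n / log₂ n` vertices. -/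
theorem stmt4 :
    ∀ K : ℝ, 2 ≤ K → ∃ N : ℕ, ∀ n : ℕ, N ≤ n →
      ∃ G : SimpleGraph (Fin n), ∀ s : Finset (Fin n), NearlyRegularOn G s K →
        (s.card : ℝ) ≤ 7 * K * (n : ℝ) / Real.logb 2 n := by
  intro K hK
  have hK0 : (0:ℝ) < K := by linarith
  refine ⟨2, fun n hn => ?_⟩
  have hn1 : (1:ℕ) < n := lt_of_lt_of_le one_lt_two hn
  have hnR1 : (1:ℝ) < (n:ℝ) := by exact_mod_cast hn1
  have hn0 : (0:ℝ) < (n:ℝ) := by linarith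
  have hlogn : 0 < Real.log n := Real.log_pos hnR1
  have hlog2 : (0.6931471803:ℝ) < Real.log 2 := Real.log_two_gt_d9
  have hsq0 : 0 < Real.sqrt n := Real.sqrt_pos.mpr hn0
  have hsq1 : (1:ℝ) < Real.sqrt n := by
    nlinarith [Real.sq_sqrt hn0.le, Real.sqrt_nonneg (n:ℝ)]
  set t : ℕ := ⌈Real.sqrt (n:ℝ)⌉₊ with htdef
  have htR : Real.sqrt n ≤ (t:ℝ) := Nat.le_ceil _
  have hlogt : Real.log n / 2 ≤ Real.log t := by
    rw [← Real.log_sqrt hn0.le]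
    have : (0:ℝ) < Real.sqrt n := hsq0
    gcongr
  have hlogt0 : 0 < Real.log t := by linarith
  have ht0 : (0:ℝ) < (t:ℝ) := by linarith
  set c : Fin n → ℕ := fun v => ⌈Real.exp ((((v:ℕ):ℝ) + 1) * Real.log t / n)⌉₊ with hcdef
  have hc1 : ∀ v : Fin n, 1 < c v := by
    intro v
    rw [hcdef]
    apply Nat.lt_ceil.mpr
    have hpos : (0:ℝ) < (((v:ℕ):ℝ) + 1) * Real.log t / n := by positivity
    calc ((1:ℕ):ℝ) = Real.exp 0 := by simp
      _ < _ := Real.exp_lt_exp.mpr hpos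
  have hc_le : ∀ v : Fin n, c v ≤ t := by
    intro v
    rw [hcdef]
    apply Nat.ceil_le.mpr
    have hv : (((v:ℕ):ℝ) + 1) ≤ (n:ℝ) := by
      have := v.isLt
      exact_mod_cast Nat.succ_le_of_lt this
    have harg : (((v:ℕ):ℝ) + 1) * Real.log t / n ≤ Real.log t := by
      rw [div_le_iff₀ hn0]
      nlinarith [hlogt0.le]
    calc Real.exp ((((v:ℕ):ℝ) + 1) * Real.log t / n) ≤ Real.exp (Real.log t) :=
          Real.exp_le_exp.mpr harg
      _ = (t:ℝ) := Real.exp_log ht0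
  -- bracket: log(c v - 1) < (v+1) log t / n ≤ log (c v)
  have hupper : ∀ v : Fin n, (((v:ℕ):ℝ) + 1) * Real.log t / n ≤ Real.log (c v) := by
    intro v
    have h1 : Real.exp ((((v:ℕ):ℝ) + 1) * Real.log t / n) ≤ ((c v : ℕ):ℝ) := by
      rw [hcdef]; exact Nat.le_ceil _
    have h2 := Real.log_le_log (Real.exp_pos _) h1
    rwa [Real.log_exp] at h2
  have hlower : ∀ v : Fin n, Real.log ((c v - 1 : ℕ)) < (((v:ℕ):ℝ) + 1) * Real.log t / n := by
    intro v
    have hlt : c v - 1 < c v := by have := hc1 v; omega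
    have h1 : ((c v - 1 : ℕ):ℝ) < Real.exp ((((v:ℕ):ℝ) + 1) * Real.log t / n) := by
      rw [hcdef] at hlt ⊢
      exact Nat.lt_ceil.mp hlt
    have hpos : (0:ℝ) < ((c v - 1 : ℕ):ℝ) := by
      have := hc1 v
      have : 1 ≤ c v - 1 := by omega
      exact_mod_cast Nat.lt_of_lt_of_le Nat.zero_lt_one this
    have h2 := Real.log_lt_log hpos h1
    rwa [Real.log_exp] at h2
  set G : SimpleGraph (Fin n) := SimpleGraph.fromRel (fun v w => c v = c w) with hGdef
  refine ⟨G, ?_⟩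
  intro s hs
  have hRHS0 : 0 < Real.logb 2 (n:ℝ) := Real.logb_pos (by norm_num) hnR1
  rcases s.eq_empty_or_nonempty with hse | hne
  · rw [hse]
    simp only [Finset.card_empty, Nat.cast_zero]
    exact div_nonneg (by positivity) hRHS0.le
  set a : ℕ → ℕ := fun i => (s.filter (fun u => c u = i)).card with hadef
  have hdeg : ∀ v ∈ s, degOn G s v + 1 = a (c v) := by
    intro v hv
    have h1 : s.filter (fun w => G.Adj v w) = (s.filter (fun u => c u = c v)).erase v := by
      ext u
      simp only [Finset.mem_erase, Finset.mem_filter, hGdef, SimpleGraph.fromRel_adj]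
      constructor
      · rintro ⟨hu, hne', h | h⟩
        · exact ⟨fun h' => hne' h'.symm, hu, h.symm⟩
        · exact ⟨fun h' => hne' h'.symm, hu, h⟩
      · rintro ⟨hne', hu, h⟩
        exact ⟨hu, fun h' => hne' h'.symm, Or.inr h⟩
    have hv' : v ∈ s.filter (fun u => c u = c v) := Finset.mem_filter.mpr ⟨hv, rfl⟩
    rw [show degOn G s v = ((s.filter (fun u => c u = c v)).erase v).card from by
      rw [degOn]; convert congrArg Finset.card h1, Finset.card_erase_of_mem hv']
    simp only [hadef]
    have : 0 < (s.filter (fun u => c u = c v)).card := Finset.card_pos.mpr ⟨v, hv'⟩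
    omega
  obtain ⟨w, hw, hwmin⟩ := Finset.exists_min_image s (fun v => a (c v)) hne
  set m : ℕ := a (c w) with hmdef
  have hm1 : 1 ≤ m := by
    rw [hmdef, hadef]
    exact Finset.card_pos.mpr ⟨w, Finset.mem_filter.mpr ⟨hw, rfl⟩⟩
  have hkey : ∀ v ∈ s, ((a (c v) : ℕ):ℝ) ≤ K * ((m:ℝ) - 1) + 1 := by
    intro v hv
    have h1 := hs v hv w hw
    have h2 := hdeg v hv
    have h3 := hdeg w hw
    have h2' : ((degOn G s v : ℕ):ℝ) + 1 = ((a (c v):ℕ):ℝ) := by exact_mod_cast congrArg (Nat.cast : ℕ → ℝ) h2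
    have h3' : ((degOn G s w : ℕ):ℝ) + 1 = ((m:ℕ):ℝ) := by exact_mod_cast congrArg (Nat.cast : ℕ → ℝ) h3
    nlinarith [h1]
  have hsum : s.card = ∑ i ∈ s.image c, a i :=
    Finset.card_eq_sum_card_fiberwise (fun v hv => Finset.mem_image_of_mem c hv)
  by_cases hm : m = 1
  · -- minimal fiber has one vertex: everything is an independent set
    have hall : ∀ i ∈ s.image c, a i = 1 := by
      intro i hi
      obtain ⟨v, hv, rfl⟩ := Finset.mem_image.mp hi
      have h1 := hkey v hv
      rw [hm] at h1
      simp only [Nat.cast_one] at h1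
      have h1' : ((a (c v):ℕ):ℝ) ≤ 1 := by linarith
      have h2 : a (c v) ≤ 1 := by exact_mod_cast h1'
      have h3 : m ≤ a (c v) := hwmin v hv
      omega
    have hcard : s.card = (s.image c).card := by
      rw [hsum, Finset.sum_congr rfl hall, Finset.sum_const, smul_eq_mul, mul_one]
    have hsub : s.image c ⊆ Finset.Ioc 1 t := by
      intro i hi
      obtain ⟨v, hv, rfl⟩ := Finset.mem_image.mp hi
      exact Finset.mem_Ioc.mpr ⟨hc1 v, hc_le v⟩
    have himage : (s.image c).card ≤ t - 1 := by
      have := Finset.card_le_card hsub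
      simpa [Nat.card_Ioc] using this
    have htub : ((t:ℕ):ℝ) < Real.sqrt n + 1 := by
      rw [htdef]
      exact Nat.ceil_lt_add_one (Real.sqrt_nonneg _)
    have hcR : (s.card : ℝ) ≤ Real.sqrt n := by
      have h1 : (s.card : ℝ) ≤ ((t - 1 : ℕ):ℝ) := by
        exact_mod_cast hcard ▸ himage
      have h2 : ((t - 1 : ℕ):ℝ) = (t:ℝ) - 1 := by
        have : 1 ≤ t := by
          have := hsq1; have := htR; exact_mod_cast le_trans (by linarith : (1:ℝ) ≤ Real.sqrt n) htR
        push_cast [this]; ring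
      rw [h2] at h1
      linarith
    rw [Real.logb, div_div_eq_mul_div, le_div_iff₀ hlogn]
    have hln : Real.log n ≤ 2 * Real.sqrt n := by
      have h := Real.log_le_sub_one_of_pos hsq0
      have h2 : Real.log n = 2 * Real.log (Real.sqrt n) := by
        rw [Real.log_sqrt hn0.le]; ring
      linarith
    have hmul : (s.card : ℝ) * Real.log n ≤ Real.sqrt n * (2 * Real.sqrt n) := by
      have := Nat.cast_nonneg (α := ℝ) s.card
      nlinarith [hlogn.le]
    have hsq : Real.sqrt n * Real.sqrt n = (n:ℝ) := Real.mul_self_sqrt hn0.le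
    have h2n : (s.card:ℝ) * Real.log n ≤ 2 * (n:ℝ) := by nlinarith
    have h3 : (2:ℝ) ≤ 7 * K * Real.log 2 := by nlinarith
    have h4 : 2 * (n:ℝ) ≤ 7 * K * (n:ℝ) * Real.log 2 := by
      nlinarith [mul_nonneg (by linarith : (0:ℝ) ≤ 7 * K * Real.log 2 - 2) hn0.le]
    linarith
  -- main case: m ≥ 2
  have hm2 : 2 ≤ m := by omega
  have hmR : (2:ℝ) ≤ (m:ℝ) := by exact_mod_cast hm2
  set X : ℝ := (n:ℝ) / Real.log t with hXdef
  have hX0 : 0 < X := by positivity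
  have hgeo : ∀ i ∈ s.image c, ((i:ℝ) - 1) * ((m:ℝ) - 1) ≤ X := by
    intro i hi
    obtain ⟨v₀, hv₀, hcv⟩ := Finset.mem_image.mp hi
    have h2i : 2 ≤ i := by have := hc1 v₀; omega
    have hiR : (2:ℝ) ≤ (i:ℝ) := by exact_mod_cast h2i
    have hma : m ≤ a i := by rw [← hcv]; exact hwmin v₀ hv₀
    set A : ℝ := (n:ℝ) * Real.log ((i - 1 : ℕ)) / Real.log t with hAdef
    set B : ℝ := (n:ℝ) * Real.log i / Real.log t with hBdef
    have hi1R : ((i - 1 : ℕ):ℝ) = (i:ℝ) - 1 := by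
      push_cast [Nat.cast_sub (by omega : 1 ≤ i)]; ring
    have hi1pos : (1:ℝ) ≤ ((i - 1 : ℕ):ℝ) := by rw [hi1R]; linarith
    have hA0 : 0 ≤ A := by
      rw [hAdef]
      have : 0 ≤ Real.log ((i - 1 : ℕ)) := Real.log_nonneg hi1pos
      positivity
    have hB0 : 0 ≤ B := by
      rw [hBdef]
      have : 0 ≤ Real.log i := Real.log_nonneg (by linarith)
      positivity
    -- every vertex of the fiber lies in the real interval (A, B]
    have hbr : ∀ u ∈ s.filter (fun u => c u = i),
        A < ((u:ℕ):ℝ) + 1 ∧ ((u:ℕ):ℝ) + 1 ≤ B := by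
      intro u hu
      have hcu : c u = i := (Finset.mem_filter.mp hu).2
      constructor
      · have h1 := hlower u
        rw [hcu] at h1
        rw [hAdef, div_lt_iff₀ hlogt0]
        rw [lt_div_iff₀ hn0] at h1
        nlinarith
      · have h1 := hupper u
        rw [hcu] at h1
        rw [hBdef, le_div_iff₀ hlogt0]
        rw [div_le_iff₀ hn0] at h1
        nlinarith
    have hcount : a i ≤ ⌊B⌋₊ - ⌊A⌋₊ := by
      rw [hadef]
      have hmaps : ∀ u ∈ s.filter (fun u => c u = i),
          (fun u : Fin n => (u:ℕ) + 1) u ∈ Finset.Ioc ⌊A⌋₊ ⌊B⌋₊ := by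
        intro u hu
        obtain ⟨h1, h2⟩ := hbr u hu
        refine Finset.mem_Ioc.mpr ⟨?_, ?_⟩
        · exact (Nat.floor_lt hA0).mpr (by exact_mod_cast h1)
        · exact Nat.le_floor (by exact_mod_cast h2)
      have hinj : Set.InjOn (fun u : Fin n => (u:ℕ) + 1)
          ↑(s.filter (fun u => c u = i)) := by
        intro u1 _ u2 _ h
        simp only at h
        exact Fin.ext (by omega)
      have := Finset.card_le_card_of_injOn _ hmaps hinj
      simpa [Nat.card_Ioc] using this
    have hfl : ⌊A⌋₊ ≤ ⌊B⌋₊ := by omega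
    have hcR : ((a i : ℕ):ℝ) ≤ (⌊B⌋₊:ℝ) - (⌊A⌋₊:ℝ) := by
      rw [← Nat.cast_sub hfl]
      exact_mod_cast hcount
    have hfB : (⌊B⌋₊:ℝ) ≤ B := Nat.floor_le hB0
    have hfA : A - 1 < (⌊A⌋₊:ℝ) := by
      have := Nat.lt_floor_add_one A
      linarith
    have hmB : ((m:ℕ):ℝ) ≤ B - A + 1 := by
      have : ((m:ℕ):ℝ) ≤ ((a i : ℕ):ℝ) := by exact_mod_cast hma
      linarith
    -- log i - log(i-1) ≤ 1/(i-1)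
    have hld : Real.log i - Real.log ((i - 1 : ℕ)) ≤ 1 / ((i:ℝ) - 1) := by
      have hr0 : (0:ℝ) < (i:ℝ) - 1 := by linarith
      have hdivpos : (0:ℝ) < (i:ℝ) / ((i:ℝ) - 1) := by positivity
      have h1 : Real.log ((i:ℝ) / ((i:ℝ) - 1)) ≤ (i:ℝ) / ((i:ℝ) - 1) - 1 :=
        Real.log_le_sub_one_of_pos hdivpos
      have h2 : Real.log ((i:ℝ) / ((i:ℝ) - 1)) = Real.log i - Real.log ((i:ℝ) - 1) :=
        Real.log_div (by linarith) (by linarith)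
      have h3 : (i:ℝ) / ((i:ℝ) - 1) - 1 = 1 / ((i:ℝ) - 1) := by
        field_simp
        ring
      rw [h2, h3] at h1
      rw [hi1R]
      exact h1
    have hBA : B - A = (n:ℝ) * (Real.log i - Real.log ((i - 1 : ℕ))) / Real.log t := by
      rw [hAdef, hBdef]; ring
    have h5 : ((m:ℝ) - 1) ≤ (n:ℝ) * (1 / ((i:ℝ) - 1)) / Real.log t := by
      have h6 : B - A ≤ (n:ℝ) * (1 / ((i:ℝ) - 1)) / Real.log t := by
        rw [hBA]
        gcongr
      have : ((m:ℕ):ℝ) = (m:ℝ) := rfl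
      linarith
    have hr0 : (0:ℝ) < (i:ℝ) - 1 := by linarith
    rw [hXdef, le_div_iff₀ hlogt0]
    rw [le_div_iff₀ hlogt0] at h5
    have h6 := mul_le_mul_of_nonneg_left h5 hr0.le
    have h7 : ((i:ℝ) - 1) * ((n:ℝ) * (1 / ((i:ℝ) - 1))) = (n:ℝ) := by
      field_simp
    nlinarith
  -- bound the number of fibers
  set Bn : ℕ := ⌊1 + X / ((m:ℝ) - 1)⌋₊ with hBndef
  have hm1R : (0:ℝ) < (m:ℝ) - 1 := by linarith
  have harg0 : (0:ℝ) ≤ 1 + X / ((m:ℝ) - 1) := by positivity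
  have hsub2 : s.image c ⊆ Finset.Ioc 1 Bn := by
    intro i hi
    refine Finset.mem_Ioc.mpr ⟨?_, ?_⟩
    · obtain ⟨v, hv, rfl⟩ := Finset.mem_image.mp hi
      exact hc1 v
    · apply Nat.le_floor
      have h1 := hgeo i hi
      have : (i:ℝ) - 1 ≤ X / ((m:ℝ) - 1) := by
        rw [le_div_iff₀ hm1R]
        linarith
      push_cast
      linarith
  have hBn1 : 1 ≤ Bn := by
    apply Nat.le_floor
    have : (0:ℝ) ≤ X / ((m:ℝ) - 1) := by positivity
    push_cast
    linarith
  have hcnt : ((s.image c).card : ℝ) ≤ X / ((m:ℝ) - 1) := by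
    have h1 : (s.image c).card ≤ Bn - 1 := by
      have := Finset.card_le_card hsub2
      simpa [Nat.card_Ioc] using this
    have h2 : ((s.image c).card : ℝ) ≤ (Bn:ℝ) - 1 := by
      have := (Nat.cast_le (α := ℝ)).mpr h1
      rwa [Nat.cast_sub hBn1, Nat.cast_one] at this
    have h3 : (Bn:ℝ) ≤ 1 + X / ((m:ℝ) - 1) := Nat.floor_le harg0
    linarith
  -- sum up
  have hcardR : (s.card : ℝ) = ∑ i ∈ s.image c, ((a i : ℕ):ℝ) := by
    rw [hsum]; push_cast; rfl
  have hbound : (s.card : ℝ) ≤ ((s.image c).card : ℝ) * (K * ((m:ℝ) - 1) + 1) := by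
    rw [hcardR]
    have h1 : ∀ i ∈ s.image c, ((a i : ℕ):ℝ) ≤ K * ((m:ℝ) - 1) + 1 := by
      intro i hi
      obtain ⟨v, hv, rfl⟩ := Finset.mem_image.mp hi
      exact hkey v hv
    calc ∑ i ∈ s.image c, ((a i : ℕ):ℝ) ≤ ∑ _i ∈ s.image c, (K * ((m:ℝ) - 1) + 1) :=
          Finset.sum_le_sum h1
      _ = ((s.image c).card : ℝ) * (K * ((m:ℝ) - 1) + 1) := by
          rw [Finset.sum_const, nsmul_eq_mul]
  have hfac : (0:ℝ) ≤ K * ((m:ℝ) - 1) + 1 := by nlinarith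
  have h7 : (s.card : ℝ) ≤ (X / ((m:ℝ) - 1)) * (K * ((m:ℝ) - 1) + 1) :=
    le_trans hbound (mul_le_mul_of_nonneg_right hcnt hfac)
  have h8 : (X / ((m:ℝ) - 1)) * (K * ((m:ℝ) - 1) + 1) ≤ 2 * K * X := by
    rw [div_mul_eq_mul_div, div_le_iff₀ hm1R]
    have hKm : (1:ℝ) ≤ K * ((m:ℝ) - 1) := by nlinarith
    nlinarith [mul_nonneg hX0.le (by linarith : (0:ℝ) ≤ K * ((m:ℝ) - 1) - 1)]
  have h9 : X ≤ 2 * (n:ℝ) / Real.log n := by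
    rw [hXdef, div_le_div_iff₀ hlogt0 hlogn]
    nlinarith
  rw [Real.logb, div_div_eq_mul_div, le_div_iff₀ hlogn]
  have h10 : (s.card : ℝ) ≤ 2 * K * (2 * (n:ℝ) / Real.log n) := by
    nlinarith [hX0.le]
  have h11 : (s.card : ℝ) * Real.log n ≤ 4 * K * (n:ℝ) := by
    have := mul_le_mul_of_nonneg_right h10 hlogn.le
    have heq : 2 * K * (2 * (n:ℝ) / Real.log n) * Real.log n = 4 * K * (n:ℝ) := by
      field_simp; ring
    linarith [heq ▸ this]
  have h12 : 4 * K * (n:ℝ) ≤ 7 * K * (n:ℝ) * Real.log 2 := by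
    have hh : (0:ℝ) ≤ 7 * Real.log 2 - 4 := by nlinarith [hlog2]
    nlinarith [mul_nonneg (mul_nonneg hK0.le hn0.le) hh]
  linarith [h11]
end

section
/- Let K > 1 and 0 < α < 1/2 be reals. Every simple graph G on n vertices with average degree d = d(G) and maximum degree Δ(G) ≤ K·d contains an induced subgraph G* that is (K/α)-nearly regular, has at least ((1−2α)/(K−2α))·n vertices, and has at least ((K−2Kα)/(2K−4α))·n·d edges. -/
open scoped Classical

lemma edgesOn_erase {V : Type*} [Fintype V] (G : SimpleGraph V) {s : Finset V} {v : V}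
    (hv : v ∈ s) :
    edgesOn G s = edgesOn G (s.erase v) + degOn G s v := by
  classical
  unfold edgesOn degOn
  have hinj : Function.Injective (fun w : V => s(v, w)) := by
    intro a b h
    simp only [Sym2.eq_iff] at h
    rcases h with ⟨-, h⟩ | ⟨h1, h2⟩
    · exact h
    · rw [← h1, h2]
  have hset : (Finset.univ.filter (fun e : Sym2 V => e ∈ G.edgeSet ∧ ∀ w ∈ e, w ∈ s))
      = (Finset.univ.filter (fun e : Sym2 V => e ∈ G.edgeSet ∧ ∀ w ∈ e, w ∈ s.erase v))
        ∪ (s.filter (fun w => G.Adj v w)).image (fun w => s(v, w)) := by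
    ext e
    induction e using Sym2.ind with
    | _ a b =>
      simp only [Finset.mem_filter, Finset.mem_union, Finset.mem_image, Finset.mem_univ,
        true_and, SimpleGraph.mem_edgeSet, Sym2.mem_iff, Finset.mem_erase, Sym2.eq_iff,
        or_imp, forall_and, forall_eq]
      constructor
      · rintro ⟨hab, hs⟩
        by_cases hva : v = a
        · subst hva
          right
          exact ⟨b, ⟨hs.2, hab⟩, Or.inl ⟨rfl, rfl⟩⟩
        by_cases hvb : v = b
        · subst hvb
          right
          exact ⟨a, ⟨hs.1, hab.symm⟩, Or.inr ⟨rfl, rfl⟩⟩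
        · exact Or.inl ⟨hab, ⟨Ne.symm hva, Ne.symm hvb⟩, hs⟩
      · rintro (⟨hab, h1, h2⟩ | ⟨w, ⟨hw, hadj⟩, (⟨h1, h2⟩ | ⟨h1, h2⟩)⟩)
        · exact ⟨hab, h2⟩
        · subst h1; subst h2; exact ⟨hadj, hv, hw⟩
        · subst h1; subst h2; exact ⟨hadj.symm, hw, hv⟩
  rw [hset, Finset.card_union_of_disjoint, Finset.card_image_of_injective _ hinj]
  rw [Finset.disjoint_right]
  rintro e he hef
  simp only [Finset.mem_image, Finset.mem_filter] at he hef
  rcases he with ⟨w, hw, rfl⟩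
  have := hef.2.2 v (by simp)
  exact (Finset.notMem_erase v s) this

lemma degOn_mono {V : Type*} (G : SimpleGraph V) {s t : Finset V} (h : s ⊆ t) (v : V) :
    degOn G s v ≤ degOn G t v :=
  Finset.card_le_card (Finset.filter_subset_filter _ h)

lemma edgesOn_empty {V : Type*} [Fintype V] (G : SimpleGraph V) : edgesOn G (∅ : Finset V) = 0 := by
  unfold edgesOn
  rw [Finset.card_eq_zero, Finset.filter_eq_empty_iff]
  intro e _
  induction e using Sym2.ind with
  | _ a b =>
    rintro ⟨-, h⟩
    exact absurd (h a (by simp)) (by simp)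

lemma handshake {V : Type*} [Fintype V] (G : SimpleGraph V) (s : Finset V) :
    ∑ v ∈ s, degOn G s v = 2 * edgesOn G s := by
  classical
  induction s using Finset.induction_on with
  | empty => simp [edgesOn_empty, degOn]
  | @insert v s hv ih =>
    have herase : edgesOn G (insert v s) = edgesOn G s + degOn G (insert v s) v := by
      have := edgesOn_erase G (Finset.mem_insert_self v s)
      rwa [Finset.erase_insert hv] at this
    have hdv : degOn G (insert v s) v = degOn G s v := by
      unfold degOn
      rw [Finset.filter_insert]
      simp [G.irrefl]
    have hdw : ∀ w ∈ s, degOn G (insert v s) w = degOn G s w + (if G.Adj w v then 1 else 0) := by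
      intro w hw
      unfold degOn
      rw [Finset.filter_insert]
      by_cases h : G.Adj w v
      · rw [if_pos h, if_pos h, Finset.card_insert_of_notMem (by simp [hv])]
      · rw [if_neg h, if_neg h, Nat.add_zero]
    rw [Finset.sum_insert hv, hdv, herase, Finset.sum_congr rfl hdw, Finset.sum_add_distrib]
    have hsum : ∑ w ∈ s, (if G.Adj w v then 1 else 0) = degOn G s v := by
      rw [Finset.sum_boole]
      unfold degOn
      norm_cast
      congr 1
      ext w
      simp [SimpleGraph.adj_comm]
    rw [hsum, ih, hdv]
    ring

lemma key {V : Type*} [Fintype V] (G : SimpleGraph V) (c : ℝ) (s : Finset V) :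
    ∃ t ⊆ s, (∀ v ∈ t, c ≤ (degOn G t v : ℝ)) ∧
      (edgesOn G s : ℝ) ≤ (edgesOn G t : ℝ) + ((s.card : ℝ) - (t.card : ℝ)) * c := by
  classical
  induction s using Finset.strongInduction with
  | _ s ih =>
    by_cases h : ∀ v ∈ s, c ≤ (degOn G s v : ℝ)
    · exact ⟨s, Finset.Subset.refl s, h, by simp⟩
    · push_neg at h
      obtain ⟨v, hv, hdeg⟩ := h
      obtain ⟨t, hts, hmin, hbound⟩ := ih (s.erase v) (Finset.erase_ssubset hv)
      refine ⟨t, hts.trans (Finset.erase_subset v s), hmin, ?_⟩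
      have h1 : edgesOn G s = edgesOn G (s.erase v) + degOn G s v := edgesOn_erase G hv
      have hpos : 1 ≤ s.card := Finset.card_pos.mpr ⟨v, hv⟩
      have hcard : ((s.erase v).card : ℝ) = (s.card : ℝ) - 1 := by
        rw [Finset.card_erase_of_mem hv]
        push_cast [hpos]
        ring
      have h1' : (edgesOn G s : ℝ) = (edgesOn G (s.erase v) : ℝ) + (degOn G s v : ℝ) := by
        exact_mod_cast h1
      rw [hcard] at hbound
      nlinarith [hbound, hdeg.le]

/-- Every graph on `n` vertices with average degree `d` and maximum degree at most `K d`
contains an induced `(K/α)`-nearly regular subgraph with at least `((1-2α)/(K-2α)) n`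
vertices and at least `((K-2Kα)/(2K-4α)) n d` edges. -/
theorem stmt5 :
    ∀ K α : ℝ, 1 < K → 0 < α → α < 1 / 2 → ∀ n : ℕ, ∀ G : SimpleGraph (Fin n), ∀ d : ℝ,
      d = 2 * (edgesOn G Finset.univ : ℝ) / (n : ℝ) →
      (∀ v : Fin n, (degOn G Finset.univ v : ℝ) ≤ K * d) →
      ∃ s : Finset (Fin n), NearlyRegularOn G s (K / α) ∧
        (1 - 2 * α) / (K - 2 * α) * (n : ℝ) ≤ (s.card : ℝ) ∧
        (K - 2 * K * α) / (2 * K - 4 * α) * (n : ℝ) * d ≤ (edgesOn G s : ℝ) := by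
  intro K α hK hα hα2 n G d hd hmax
  have hden : (0:ℝ) < K - 2 * α := by linarith
  have hden2 : (0:ℝ) < 2 * K - 4 * α := by linarith
  by_cases hdpos : 0 < d
  · -- main case
    have hn0 : n ≠ 0 := by
      rintro rfl
      simp at hd
      rw [hd] at hdpos
      exact lt_irrefl 0 hdpos
    have hn : (0:ℝ) < n := by positivity
    have hEuniv : (edgesOn G (Finset.univ : Finset (Fin n)) : ℝ) = (n : ℝ) * d / 2 := by
      field_simp at hd
      linarith
    obtain ⟨t, hts, hmin, hbound⟩ := key G (α * d) (Finset.univ : Finset (Fin n))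
    have hucard : ((Finset.univ : Finset (Fin n)).card : ℝ) = (n : ℝ) := by simp
    rw [hucard, hEuniv] at hbound
    set T : ℝ := (t.card : ℝ) with hT
    -- handshake upper bound
    have hhs : 2 * (edgesOn G t : ℝ) = ∑ v ∈ t, (degOn G t v : ℝ) := by
      exact_mod_cast (handshake G t).symm
    have hEt_ub : 2 * (edgesOn G t : ℝ) ≤ T * (K * d) := by
      rw [hhs]
      calc ∑ v ∈ t, (degOn G t v : ℝ) ≤ ∑ v ∈ t, (K * d) := by
            refine Finset.sum_le_sum fun v hv => ?_
            calc (degOn G t v : ℝ) ≤ (degOn G Finset.univ v : ℝ) := by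
                  exact_mod_cast degOn_mono G (Finset.subset_univ t) v
              _ ≤ K * d := hmax v
        _ = T * (K * d) := by rw [Finset.sum_const, nsmul_eq_mul]
    -- nearly regular
    have hnr : NearlyRegularOn G t (K / α) := by
      intro v hv w hw
      have h1 : (degOn G t v : ℝ) ≤ K * d := by
        calc (degOn G t v : ℝ) ≤ (degOn G Finset.univ v : ℝ) := by
              exact_mod_cast degOn_mono G (Finset.subset_univ t) v
          _ ≤ K * d := hmax v
      have h2 : α * d ≤ (degOn G t w : ℝ) := hmin w hw
      have hKα : 0 < K / α := by positivity
      calc (degOn G t v : ℝ) ≤ K * d := h1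
        _ = (K / α) * (α * d) := by field_simp
        _ ≤ (K / α) * (degOn G t w : ℝ) := by
            exact mul_le_mul_of_nonneg_left h2 hKα.le
    -- vertex bound
    have hQ : (1 - 2 * α) * (n : ℝ) ≤ T * (K - 2 * α) := by
      nlinarith [hbound, hEt_ub, hdpos]
    have hcard : (1 - 2 * α) / (K - 2 * α) * (n : ℝ) ≤ T := by
      rw [div_mul_eq_mul_div, div_le_iff₀ hden]
      linarith
    -- edge bound
    have hedge : (K - 2 * K * α) / (2 * K - 4 * α) * (n : ℝ) * d ≤ (edgesOn G t : ℝ) := by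
      have hαd : (0:ℝ) < α * d := by positivity
      have term1 : (1 - 2 * α) * (n : ℝ) * (α * d) ≤ T * (K - 2 * α) * (α * d) :=
        mul_le_mul_of_nonneg_right hQ hαd.le
      rw [div_mul_eq_mul_div, div_mul_eq_mul_div, div_le_iff₀ hden2]
      nlinarith [hbound, term1]
    exact ⟨t, hnr, hcard, hedge⟩
  · -- degenerate case: d ≤ 0
    push_neg at hdpos
    have hE0 : (0:ℝ) ≤ (edgesOn G (Finset.univ : Finset (Fin n)) : ℝ) := by positivity
    refine ⟨Finset.univ, ?_, ?_, ?_⟩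
    · intro v hv w hw
      have h1 : (degOn G Finset.univ v : ℝ) ≤ K * d := hmax v
      have h2 : K * d ≤ 0 := mul_nonpos_of_nonneg_of_nonpos (by linarith) hdpos
      have h3 : (degOn G Finset.univ v : ℝ) = 0 :=
        le_antisymm (h1.trans h2) (by positivity)
      have h4 : (0:ℝ) ≤ (degOn G Finset.univ w : ℝ) := by positivity
      rw [h3]
      positivity
    · have hratio : (1 - 2 * α) / (K - 2 * α) ≤ 1 := by
        rw [div_le_one hden]; linarith
      have : ((Finset.univ : Finset (Fin n)).card : ℝ) = (n : ℝ) := by simp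
      rw [this]
      calc (1 - 2 * α) / (K - 2 * α) * (n : ℝ) ≤ 1 * (n : ℝ) :=
            mul_le_mul_of_nonneg_right hratio (Nat.cast_nonneg n)
        _ = (n : ℝ) := one_mul _
    · have hr : (0:ℝ) ≤ (K - 2 * K * α) / (2 * K - 4 * α) := by
        apply div_nonneg _ hden2.le
        nlinarith
      have : (K - 2 * K * α) / (2 * K - 4 * α) * (n : ℝ) * d ≤ 0 :=
        mul_nonpos_of_nonneg_of_nonpos (by positivity) hdpos
      linarith
end

section
/- Let 0 < ε < 1 be a real and let G = (V,E) be a simple graph on n vertices with density p > 0 (i.e., p = |E| / (n choose 2)). Then there is a subset V' ⊆ V of size n' ≥ ε^((2/ε)·ln(1/p))·n such that the induced subgraph G' = G[V'] has density p' ≥ p and every subset of t ≥ ε·n' vertices of G' spans at most (t choose 2)·p'·(1+ε) edges in G'. -/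
open scoped Classical

lemma edgesOn_le_choose {V : Type*} [Fintype V] (G : SimpleGraph V) (s : Finset V) :
    edgesOn G s ≤ s.card.choose 2 := by
  classical
  have hsub : (Finset.univ.filter (fun e : Sym2 V => e ∈ G.edgeSet ∧ ∀ v ∈ e, v ∈ s)) ⊆
      ((G.comap (Subtype.val : {x // x ∈ s} → V)).edgeFinset.image (Sym2.map Subtype.val)) := by
    intro e he
    simp only [Finset.mem_filter, Finset.mem_univ, true_and] at he
    obtain ⟨hedge, hmem⟩ := he
    obtain ⟨a, b, rfl⟩ : ∃ a b, e = s(a, b) := by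
      refine Sym2.ind (fun x y => ⟨x, y, rfl⟩) e
    have ha : a ∈ s := hmem a (Sym2.mem_mk_left a b)
    have hb : b ∈ s := hmem b (Sym2.mem_mk_right a b)
    refine Finset.mem_image.mpr ⟨s(⟨a, ha⟩, ⟨b, hb⟩), ?_, by simp⟩
    exact SimpleGraph.mem_edgeFinset.mpr hedge
  calc edgesOn G s ≤ _ := Finset.card_le_card hsub
    _ ≤ (G.comap (Subtype.val : {x // x ∈ s} → V)).edgeFinset.card := Finset.card_image_le
    _ ≤ (Fintype.card {x // x ∈ s}).choose 2 := SimpleGraph.card_edgeFinset_le_card_choose_two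
    _ = s.card.choose 2 := by rw [Fintype.card_coe]

lemma two_le_card_of_edgesOn_pos {V : Type*} [Fintype V] (G : SimpleGraph V) (s : Finset V)
    (h : 0 < edgesOn G s) : 2 ≤ s.card := by
  classical
  obtain ⟨e, he⟩ := Finset.card_pos.mp h
  simp only [Finset.mem_filter, Finset.mem_univ, true_and] at he
  obtain ⟨hedge, hmem⟩ := he
  obtain ⟨a, b, rfl⟩ : ∃ a b, e = s(a, b) := Sym2.ind (fun x y => ⟨x, y, rfl⟩) e
  have hab : a ≠ b := ((SimpleGraph.mem_edgeSet G).mp hedge).ne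
  have : ({a, b} : Finset V) ⊆ s := by
    intro x hx
    simp only [Finset.mem_insert, Finset.mem_singleton] at hx
    rcases hx with rfl | rfl
    · exact hmem x (by simp)
    · exact hmem x (by simp)
  calc 2 = ({a, b} : Finset V).card := (Finset.card_pair hab).symm
    _ ≤ s.card := Finset.card_le_card this

lemma log_one_add_ge (ε : ℝ) (hε0 : 0 < ε) (hε1 : ε < 1) : ε / 2 ≤ Real.log (1 + ε) := by
  rw [Real.le_log_iff_exp_le (by linarith)]
  have h1 : 1 - ε/2 ≤ Real.exp (-(ε/2)) := by linarith [Real.add_one_le_exp (-(ε/2))]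
  have h2 : Real.exp (ε/2) ≤ 1/(1-ε/2) := by
    rw [le_div_iff₀ (by linarith)]
    calc Real.exp (ε/2) * (1-ε/2) ≤ Real.exp (ε/2) * Real.exp (-(ε/2)) :=
          mul_le_mul_of_nonneg_left h1 (Real.exp_pos _).le
      _ = 1 := by rw [← Real.exp_add]; simp
  refine h2.trans ?_
  rw [div_le_iff₀ (by linarith)]; nlinarith

private lemma key_s7 (ε : ℝ) (hε0 : 0 < ε) (hε1 : ε < 1) {n : ℕ} (G : SimpleGraph (Fin n)) :
    ∀ N : ℕ, ∀ s : Finset (Fin n), s.card ≤ N → ∀ q : ℝ, 0 < q →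
      q ≤ (edgesOn G s : ℝ) / (s.card.choose 2 : ℝ) →
      ∃ s' : Finset (Fin n), s' ⊆ s ∧
        q ≤ (edgesOn G s' : ℝ) / (s'.card.choose 2 : ℝ) ∧
        ε ^ ((2 / ε) * Real.log (1 / q)) * (s.card : ℝ) ≤ (s'.card : ℝ) ∧
        ∀ t : Finset (Fin n), t ⊆ s' → ε * (s'.card : ℝ) ≤ (t.card : ℝ) →
          (edgesOn G t : ℝ) ≤ (t.card.choose 2 : ℝ) *
            ((edgesOn G s' : ℝ) / (s'.card.choose 2 : ℝ)) * (1 + ε) := by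
  intro N
  induction N with
  | zero =>
    intro s hs q hq hqd
    exfalso
    have h0 : s.card = 0 := Nat.le_zero.mp hs
    rw [h0] at hqd
    norm_num at hqd
    linarith
  | succ N ih =>
    intro s hs q hq hqd
    have hC : (0:ℝ) < (s.card.choose 2 : ℝ) := by
      by_contra h
      have h0 : (s.card.choose 2 : ℝ) = 0 := le_antisymm (not_lt.mp h) (by positivity)
      rw [h0, div_zero] at hqd
      linarith
    set d : ℝ := (edgesOn G s : ℝ) / (s.card.choose 2 : ℝ) with hd_def
    have hd1 : d ≤ 1 := by
      rw [hd_def, div_le_one hC]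
      exact_mod_cast edgesOn_le_choose G s
    have hq1 : q ≤ 1 := hqd.trans hd1
    by_cases hgood : ∀ t : Finset (Fin n), t ⊆ s → ε * (s.card : ℝ) ≤ (t.card : ℝ) →
        (edgesOn G t : ℝ) ≤ (t.card.choose 2 : ℝ) * d * (1 + ε)
    · refine ⟨s, subset_rfl, hqd, ?_, hgood⟩
      have hE : (0:ℝ) ≤ (2/ε) * Real.log (1/q) := by
        have : (0:ℝ) ≤ Real.log (1/q) := Real.log_nonneg (by rw [le_div_iff₀ hq]; linarith)
        positivity
      have h1 : ε ^ ((2/ε) * Real.log (1/q)) ≤ 1 := Real.rpow_le_one hε0.le hε1.le hE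
      have h2 : (0:ℝ) ≤ (s.card : ℝ) := Nat.cast_nonneg _
      nlinarith
    · push_neg at hgood
      obtain ⟨t, hts, htc, hviol⟩ := hgood
      have hdpos : 0 < d := lt_of_lt_of_le hq hqd
      have hrhs : (0:ℝ) ≤ (t.card.choose 2 : ℝ) * d * (1 + ε) := by positivity
      have het : 0 < edgesOn G t := by
        by_contra h
        have : edgesOn G t = 0 := by omega
        rw [this] at hviol; push_cast at hviol; linarith
      have ht2 : 2 ≤ t.card := two_le_card_of_edgesOn_pos G t het
      have hCt : (0:ℝ) < (t.card.choose 2 : ℝ) := by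
        have := Nat.choose_pos ht2
        exact_mod_cast this
      have hdt : d * (1 + ε) < (edgesOn G t : ℝ) / (t.card.choose 2 : ℝ) := by
        rw [lt_div_iff₀ hCt]; nlinarith
      have hq' : q * (1 + ε) ≤ (edgesOn G t : ℝ) / (t.card.choose 2 : ℝ) :=
        le_of_lt (lt_of_le_of_lt (by nlinarith) hdt)
      have htne : t ≠ s := by
        rintro rfl
        rw [← hd_def] at hdt
        nlinarith
      have htlt : t.card < s.card := Finset.card_lt_card (ssubset_of_subset_of_ne hts htne)
      obtain ⟨s', hs't, hq's', hsize, hprop⟩ := ih t (by omega) (q * (1 + ε)) (by positivity) hq'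
      refine ⟨s', hs't.trans hts, le_trans (by nlinarith) hq's', ?_, hprop⟩
      set E := (2/ε) * Real.log (1/q) with hE_def
      set E' := (2/ε) * Real.log (1/(q*(1+ε))) with hE'_def
      have hlog : Real.log (1/(q*(1+ε))) = Real.log (1/q) - Real.log (1+ε) := by
        rw [one_div, one_div, Real.log_inv, Real.log_inv,
          Real.log_mul (ne_of_gt hq) (by positivity)]
        ring
      have hexp : E' = E - (2/ε) * Real.log (1+ε) := by
        rw [hE'_def, hE_def, hlog]; ring
      have hone : (1:ℝ) ≤ (2/ε) * Real.log (1+ε) := by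
        have := log_one_add_ge ε hε0 hε1
        rw [div_mul_eq_mul_div, le_div_iff₀ hε0]; nlinarith
      have hEE' : E' + 1 ≤ E := by rw [hexp]; linarith
      have h1 : ε ^ E ≤ ε ^ (E' + 1) := Real.rpow_le_rpow_of_exponent_ge hε0 hε1.le hEE'
      have h2 : ε ^ (E' + 1) = ε ^ E' * ε := by rw [Real.rpow_add hε0, Real.rpow_one]
      have hpow' : (0:ℝ) ≤ ε ^ E' := (Real.rpow_pos_of_pos hε0 _).le
      calc ε ^ E * (s.card : ℝ) ≤ ε ^ E' * ε * (s.card : ℝ) := by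
            rw [← h2]; exact mul_le_mul_of_nonneg_right h1 (Nat.cast_nonneg _)
        _ = ε ^ E' * (ε * (s.card : ℝ)) := by ring
        _ ≤ ε ^ E' * (t.card : ℝ) := mul_le_mul_of_nonneg_left htc hpow'
        _ ≤ (s'.card : ℝ) := hsize

/-- Every graph `G` on `n` vertices of density `p > 0` contains an induced subgraph
`G' = G[s]` on `n' ≥ ε^((2/ε) ln(1/p)) * n` vertices of density `p' ≥ p`, in which every
set of `t ≥ ε n'` vertices spans at most `(t choose 2) p' (1+ε)` edges. -/
theorem stmt7 :
    ∀ ε : ℝ, 0 < ε → ε < 1 → ∀ n : ℕ, ∀ G : SimpleGraph (Fin n), ∀ p : ℝ,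
      p = (edgesOn G Finset.univ : ℝ) / (n.choose 2 : ℝ) → 0 < p →
      ∃ s : Finset (Fin n), ∃ p' : ℝ,
        p' = (edgesOn G s : ℝ) / (s.card.choose 2 : ℝ) ∧
        p ≤ p' ∧
        ε ^ ((2 / ε) * Real.log (1 / p)) * (n : ℝ) ≤ (s.card : ℝ) ∧
        ∀ t : Finset (Fin n), t ⊆ s → ε * (s.card : ℝ) ≤ (t.card : ℝ) →
          (edgesOn G t : ℝ) ≤ (t.card.choose 2 : ℝ) * p' * (1 + ε) := by
  intro ε hε0 hε1 n G p hp hppos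
  have hcard : (Finset.univ : Finset (Fin n)).card = n := by
    rw [Finset.card_univ, Fintype.card_fin]
  have hqd : p ≤ (edgesOn G (Finset.univ : Finset (Fin n)) : ℝ) /
      ((Finset.univ : Finset (Fin n)).card.choose 2 : ℝ) := by
    rw [hcard, ← hp]
  obtain ⟨s, -, hq, hsize, hprop⟩ :=
    key_s7 ε hε0 hε1 G n (Finset.univ : Finset (Fin n)) (le_of_eq hcard) p hppos hqd
  refine ⟨s, (edgesOn G s : ℝ) / (s.card.choose 2 : ℝ), rfl, hq, ?_, hprop⟩
  rwa [hcard] at hsize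
end

section
/- For every real a with 0 < a < 1 there exist ε₀ > 0 and, for each ε with 0 < ε < ε₀, a threshold n₀ such that the following holds for all n ≥ n₀. Let G = (V,E) be a simple graph on n vertices with density p = |E|/(n choose 2) ≥ n^(−a), and suppose that every subset of t ≥ ε·n vertices of G spans at most (t choose 2)·p·(1+ε) edges. Then for every subset U ⊆ V with |U| = ⌈ε·n⌉, the number of edges of G between U and V∖U is at most ε·n²·p·(1 + 2√ε). -/
open scoped Classical

/-- Number of edges of `G` with one endpoint in `s` and the other in `t`
(for disjoint `s`, `t`). -/
noncomputable def edgesBetween {V : Type*} (G : SimpleGraph V) (s t : Finset V) : ℕ :=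
  ((s ×ˢ t).filter (fun p => G.Adj p.1 p.2)).card


section Aux

open Finset
set_option maxHeartbeats 1600000


lemma binom_id1 {k w : ℕ} (hk : 2 ≤ k) (hkw : k + 1 ≤ w) :
    k * ((w - k) * w.choose k) = w * ((w - 1) * ((w - 2).choose (k - 1))) := by
  obtain ⟨a, rfl⟩ : ∃ a, k = a + 2 := ⟨k - 2, by omega⟩
  obtain ⟨c, rfl⟩ : ∃ c, w = a + c + 3 := ⟨w - a - 3, by omega⟩
  have e1 : a + c + 3 - (a + 2) = c + 1 := by omega
  have e2 : a + c + 3 - 1 = a + c + 2 := by omega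
  have e3 : a + c + 3 - 2 = a + c + 1 := by omega
  have e4 : a + 2 - 1 = a + 1 := by omega
  rw [e1, e2, e3, e4]
  have h1 : (a + c + 3) * (a + c + 2).choose (a + 1)
      = (a + c + 3).choose (a + 2) * (a + 2) := by
    simpa using Nat.add_one_mul_choose_eq (a + c + 2) (a + 1)
  have h2 : (a + c + 1).choose (a + 1) * (a + c + 2)
      = (a + c + 2).choose (a + 1) * (c + 1) := by
    have h := Nat.choose_mul_succ_eq (a + c + 1) (a + 1)
    have e : a + c + 1 + 1 - (a + 1) = c + 1 := by omega
    rw [e] at h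
    have e' : a + c + 1 + 1 = a + c + 2 := by omega
    rw [e'] at h
    exact h
  nlinarith [h1, h2]

lemma binom_id2 {k w : ℕ} (hk : 2 ≤ k) (hkw : k + 1 ≤ w) :
    (w - k) * ((w - 2).choose (k - 2)) = (k - 1) * ((w - 2).choose (k - 1)) := by
  obtain ⟨a, rfl⟩ : ∃ a, k = a + 2 := ⟨k - 2, by omega⟩
  obtain ⟨c, rfl⟩ : ∃ c, w = a + c + 3 := ⟨w - a - 3, by omega⟩
  have e1 : a + c + 3 - (a + 2) = c + 1 := by omega
  have e3 : a + c + 3 - 2 = a + c + 1 := by omega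
  have e4 : a + 2 - 1 = a + 1 := by omega
  have e5 : a + 2 - 2 = a := by omega
  rw [e1, e3, e4, e5]
  have h := Nat.choose_succ_right_eq (a + c + 1) a
  have e : a + c + 1 - a = c + 1 := by omega
  rw [e] at h
  -- h : (a+c+1).choose (a+1) * (a+1) = (a+c+1).choose a * (c+1)
  nlinarith [h]

lemma binom_id3 {k w : ℕ} (hk : 2 ≤ k) (hkw : k + 1 ≤ w) :
    (w - 1).choose (k - 1) = (w - 2).choose (k - 2) + (w - 2).choose (k - 1) := by
  obtain ⟨a, rfl⟩ : ∃ a, k = a + 2 := ⟨k - 2, by omega⟩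
  obtain ⟨c, rfl⟩ : ∃ c, w = a + c + 3 := ⟨w - a - 3, by omega⟩
  have e2 : a + c + 3 - 1 = a + c + 2 := by omega
  have e3 : a + c + 3 - 2 = a + c + 1 := by omega
  have e4 : a + 2 - 1 = a + 1 := by omega
  have e5 : a + 2 - 2 = a := by omega
  rw [e2, e3, e4, e5]
  exact Nat.choose_succ_succ (a + c + 1) a

lemma binom_pos {k w : ℕ} (hk : 2 ≤ k) (hkw : k + 1 ≤ w) :
    0 < (w - 2).choose (k - 1) :=
  Nat.choose_pos (by omega)

lemma sym2_ball {α : Type*} (x y : α) (Q : α → Prop) :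
    (∀ v ∈ Sym2.mk x y, Q v) ↔ Q x ∧ Q y := by
  constructor
  · intro h; exact ⟨h x (Sym2.mem_mk_left x y), h y (Sym2.mem_mk_right x y)⟩
  · rintro ⟨hx, hy⟩ v hv
    rcases Sym2.mem_iff.1 hv with rfl | rfl
    · exact hx
    · exact hy

lemma count_supersets {V : Type*} [DecidableEq V] {W A : Finset V} (hA : A ⊆ W) {k : ℕ}
    (hk : A.card ≤ k) :
    ((W.powersetCard k).filter (fun T => A ⊆ T)).card
      = (W.card - A.card).choose (k - A.card) := by
  rw [← Finset.card_sdiff_of_subset hA, ← Finset.card_powersetCard (k - A.card) (W \ A)]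
  apply Finset.card_bij' (fun T _ => T \ A) (fun T' _ => T' ∪ A)
  · intro T hT
    simp only [Finset.mem_filter, Finset.mem_powersetCard] at hT
    rw [Finset.mem_powersetCard]
    exact ⟨Finset.sdiff_subset_sdiff hT.1.1 le_rfl, by rw [Finset.card_sdiff_of_subset hT.2, hT.1.2]⟩
  · intro T' hT'
    rw [Finset.mem_powersetCard] at hT'
    have hdisj : Disjoint T' A := Finset.disjoint_of_subset_left hT'.1 (Finset.sdiff_disjoint)
    simp only [Finset.mem_filter, Finset.mem_powersetCard]
    refine ⟨⟨Finset.union_subset (hT'.1.trans (Finset.sdiff_subset)) hA, ?_⟩,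
      Finset.subset_union_right⟩
    rw [Finset.card_union_of_disjoint hdisj, hT'.2]
    omega
  · intro T hT
    simp only [Finset.mem_filter] at hT
    exact Finset.sdiff_union_of_subset hT.2
  · intro T' hT'
    rw [Finset.mem_powersetCard] at hT'
    have hdisj : Disjoint T' A := Finset.disjoint_of_subset_left hT'.1 (Finset.sdiff_disjoint)
    exact Finset.union_sdiff_cancel_right hdisj

section Fixed
variable {V : Type*} [Fintype V] [DecidableEq V] (G : SimpleGraph V) (U : Finset V)

noncomputable def Sedges (G : SimpleGraph V) : Finset (Sym2 V) :=
  Finset.univ.filter (fun e : Sym2 V => e ∈ G.edgeSet)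

lemma edgesOn_sum (s : Finset V) :
    edgesOn G s = ∑ e ∈ Sedges G, if (∀ v ∈ e, v ∈ s) then 1 else 0 := by
  rw [edgesOn, Finset.card_filter, Sedges, Finset.sum_filter]
  exact Finset.sum_congr rfl (fun e _ => by split_ifs <;> simp_all)

/-- mixed edges -/
lemma mixed_count :
    ((Sedges G).filter (fun e => ¬ (∀ v ∈ e, v ∈ U) ∧ ¬ (∀ v ∈ e, v ∈ Uᶜ))).card
      = edgesBetween G U Uᶜ := by
  rw [edgesBetween]
  symm
  apply Finset.card_bij (fun (p : V × V) _ => Sym2.mk p.1 p.2)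
  · rintro ⟨x, y⟩ hp
    simp only [Finset.mem_filter, Finset.mem_product, Finset.mem_compl] at hp
    obtain ⟨⟨hx, hy⟩, hadj⟩ := hp
    simp only [Finset.mem_filter, Sedges, Finset.mem_univ, true_and]
    refine ⟨G.mem_edgeSet.2 hadj, ?_, ?_⟩
    · rw [sym2_ball]; rintro ⟨-, h2⟩; exact hy h2
    · rw [sym2_ball]; rintro ⟨h1, -⟩; exact (Finset.mem_compl.1 h1) hx
  · rintro ⟨x, y⟩ hp ⟨x', y'⟩ hp' heq
    simp only [Finset.mem_filter, Finset.mem_product, Finset.mem_compl] at hp hp'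
    rcases Sym2.eq_iff.1 heq with ⟨rfl, rfl⟩ | ⟨rfl, rfl⟩
    · rfl
    · exact absurd hp'.1.1 hp.1.2
  · intro e he
    simp only [Finset.mem_filter, Sedges, Finset.mem_univ, true_and] at he
    obtain ⟨hedge, h1, h2⟩ := he
    induction e with
    | _ x y =>
      have hadj : G.Adj x y := G.mem_edgeSet.1 hedge
      rw [sym2_ball] at h1 h2
      by_cases hx : x ∈ U
      · have hy : y ∉ U := fun hy => h1 ⟨hx, hy⟩
        exact ⟨(x, y), Finset.mem_filter.2 ⟨Finset.mem_product.2 ⟨hx, Finset.mem_compl.2 hy⟩, hadj⟩, rfl⟩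
      · have hy : y ∈ U := by
          by_contra hy
          exact h2 ⟨Finset.mem_compl.2 hx, Finset.mem_compl.2 hy⟩
        refine ⟨(y, x), Finset.mem_filter.2 ⟨Finset.mem_product.2 ⟨hy, Finset.mem_compl.2 hx⟩, hadj.symm⟩, Sym2.eq_swap⟩

lemma edgesBetween_sum :
    edgesBetween G U Uᶜ = ∑ e ∈ Sedges G,
      if (¬ (∀ v ∈ e, v ∈ U) ∧ ¬ (∀ v ∈ e, v ∈ Uᶜ)) then 1 else 0 := by
  rw [← mixed_count G U, Finset.card_filter]

/-- Partition of the edge count of the whole graph. -/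
lemma total_split :
    edgesOn G Finset.univ = edgesOn G U + edgesBetween G U Uᶜ + edgesOn G Uᶜ := by
  rw [edgesOn_sum, edgesOn_sum, edgesOn_sum, edgesBetween_sum, ← Finset.sum_add_distrib,
    ← Finset.sum_add_distrib]
  apply Finset.sum_congr rfl
  intro e he
  simp only [Sedges, Finset.mem_filter, Finset.mem_univ, true_and] at he
  induction e with
  | _ x y =>
    simp only [sym2_ball, Finset.mem_univ, Finset.mem_compl, and_self, if_true]
    by_cases hx : x ∈ U <;> by_cases hy : y ∈ U <;> simp [hx, hy]

/-- The master double-counting identity. -/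
lemma master (k : ℕ) (hk2 : 2 ≤ k) :
    ∑ T ∈ Uᶜ.powersetCard k, edgesOn G (U ∪ T)
      = Uᶜ.card.choose k * edgesOn G U
        + (Uᶜ.card - 1).choose (k - 1) * edgesBetween G U Uᶜ
        + (Uᶜ.card - 2).choose (k - 2) * edgesOn G Uᶜ := by
  have key : ∀ e ∈ Sedges G,
      ((Uᶜ.powersetCard k).filter (fun T => ∀ v ∈ e, v ∈ U ∪ T)).card
        = (if ∀ v ∈ e, v ∈ U then Uᶜ.card.choose k else 0)
          + (if (¬ (∀ v ∈ e, v ∈ U) ∧ ¬ (∀ v ∈ e, v ∈ Uᶜ)) then (Uᶜ.card - 1).choose (k - 1) else 0)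
          + (if ∀ v ∈ e, v ∈ Uᶜ then (Uᶜ.card - 2).choose (k - 2) else 0) := by
    intro e he
    simp only [Sedges, Finset.mem_filter, Finset.mem_univ, true_and] at he
    induction e with
    | _ x y =>
      have hadj : G.Adj x y := G.mem_edgeSet.1 he
      have hne : x ≠ y := hadj.ne
      simp only [sym2_ball, Finset.mem_compl, Finset.mem_union]
      by_cases hx : x ∈ U <;> by_cases hy : y ∈ U
      · rw [Finset.filter_true_of_mem (fun T _ => ⟨Or.inl hx, Or.inl hy⟩),
          Finset.card_powersetCard]
        simp [hx, hy]
      · -- x ∈ U, y ∉ U : count T ∋ y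
        have : ((Uᶜ.powersetCard k).filter (fun T => (x ∈ U ∨ x ∈ T) ∧ (y ∈ U ∨ y ∈ T))).card
            = ((Uᶜ.powersetCard k).filter (fun T => ({y} : Finset V) ⊆ T)).card := by
          apply congrArg
          apply Finset.filter_congr
          intro T _
          simp only [Finset.singleton_subset_iff]
          constructor
          · rintro ⟨-, h | h⟩
            · exact absurd h hy
            · exact h
          · intro h; exact ⟨Or.inl hx, Or.inr h⟩
        rw [this, count_supersets (by simp [hy]) (by simpa using hk2.trans' one_le_two)]
        simp [hx, hy, Finset.card_singleton]
      · -- x ∉ U, y ∈ U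
        have : ((Uᶜ.powersetCard k).filter (fun T => (x ∈ U ∨ x ∈ T) ∧ (y ∈ U ∨ y ∈ T))).card
            = ((Uᶜ.powersetCard k).filter (fun T => ({x} : Finset V) ⊆ T)).card := by
          apply congrArg
          apply Finset.filter_congr
          intro T _
          simp only [Finset.singleton_subset_iff]
          constructor
          · rintro ⟨h | h, -⟩
            · exact absurd h hx
            · exact h
          · intro h; exact ⟨Or.inr h, Or.inl hy⟩
        rw [this, count_supersets (by simp [hx]) (by simpa using hk2.trans' one_le_two)]
        simp [hx, hy, Finset.card_singleton]
      · -- both outside U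
        have : ((Uᶜ.powersetCard k).filter (fun T => (x ∈ U ∨ x ∈ T) ∧ (y ∈ U ∨ y ∈ T))).card
            = ((Uᶜ.powersetCard k).filter (fun T => ({x, y} : Finset V) ⊆ T)).card := by
          apply congrArg
          apply Finset.filter_congr
          intro T _
          rw [Finset.insert_subset_iff, Finset.singleton_subset_iff]
          constructor
          · rintro ⟨h1 | h1, h2 | h2⟩ <;> first
              | exact absurd h1 hx | exact absurd h2 hy | exact ⟨h1, h2⟩
          · rintro ⟨h1, h2⟩; exact ⟨Or.inr h1, Or.inr h2⟩
        have hcard2 : ({x, y} : Finset V).card = 2 := Finset.card_pair hne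
        rw [this, count_supersets (by rw [Finset.insert_subset_iff, Finset.singleton_subset_iff]; exact ⟨Finset.mem_compl.2 hx, Finset.mem_compl.2 hy⟩) (by rw [hcard2]; exact hk2)]
        rw [hcard2]
        simp [hx, hy]
  -- now the sum manipulation
  calc ∑ T ∈ Uᶜ.powersetCard k, edgesOn G (U ∪ T)
      = ∑ T ∈ Uᶜ.powersetCard k, ∑ e ∈ Sedges G,
          (if (∀ v ∈ e, v ∈ U ∪ T) then 1 else 0) :=
        Finset.sum_congr rfl (fun T _ => by rw [edgesOn_sum])
    _ = ∑ e ∈ Sedges G, ∑ T ∈ Uᶜ.powersetCard k,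
          (if (∀ v ∈ e, v ∈ U ∪ T) then 1 else 0) := Finset.sum_comm
    _ = ∑ e ∈ Sedges G,
          ((Uᶜ.powersetCard k).filter (fun T => ∀ v ∈ e, v ∈ U ∪ T)).card :=
        Finset.sum_congr rfl (fun e _ => (Finset.card_filter _ _).symm)
    _ = ∑ e ∈ Sedges G,
          ((if ∀ v ∈ e, v ∈ U then Uᶜ.card.choose k else 0)
          + (if (¬ (∀ v ∈ e, v ∈ U) ∧ ¬ (∀ v ∈ e, v ∈ Uᶜ)) then (Uᶜ.card - 1).choose (k - 1) else 0)
          + (if ∀ v ∈ e, v ∈ Uᶜ then (Uᶜ.card - 2).choose (k - 2) else 0)) :=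
        Finset.sum_congr rfl key
    _ = _ := by
        rw [Finset.sum_add_distrib, Finset.sum_add_distrib]
        congr 1
        · congr 1
          · rw [edgesOn_sum, Finset.mul_sum]
            exact Finset.sum_congr rfl (fun e _ => by split_ifs <;> simp)
          · rw [edgesBetween_sum, Finset.mul_sum]
            exact Finset.sum_congr rfl (fun e _ => by split_ifs <;> simp)
        · rw [edgesOn_sum, Finset.mul_sum]
          exact Finset.sum_congr rfl (fun e _ => by split_ifs <;> simp)

end Fixed

set_option maxHeartbeats 1600000 in
lemma analytic_core {s N μ κ ω : ℝ} (hs0 : 0 < s) (hs2 : s ≤ 1/100)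
    (hN9 : 1 ≤ s^9 * N) (hN0 : 0 < N)
    (hμ1 : s^2 * N ≤ μ) (hμ2 : μ ≤ s^2 * N + 1)
    (hκ1 : s * N ≤ κ) (hκ2 : κ ≤ s * N + 1)
    (hω : ω = N - μ) :
    ω * (ω - 1) * ((μ + κ) * ((μ + κ) - 1) / 2 * (1 + s^2))
      + κ * (κ - 1) * ((μ * (μ - 1) / 2 * (1 + s^2)) - N * (N - 1) / 2)
      ≤ κ * (ω - κ) * (s^2 * N^2 * (1 + 2 * s)) := by
  have hs_le1 : s ≤ 1 := by linarith
  have hkey : ∀ i : ℕ, 1 ≤ i → s^i ≤ s := by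
    intro i hi
    calc s^i ≤ s^1 := pow_le_pow_of_le_one hs0.le hs_le1 hi
    _ = s := pow_one s
  have hs3small : s^3 ≤ 1/1000000 := by
    calc s^3 ≤ (1/100)^3 := pow_le_pow_left₀ hs0.le hs2 3
    _ = 1/1000000 := by norm_num
  have h6 : 3 ≤ s^6 * N := by
    have hx : 1 ≤ s^3 * (s^6 * N) := by linarith only [hN9]
    have hy : (0:ℝ) ≤ s^6 * N := by positivity
    have hz := mul_le_mul_of_nonneg_right hs3small hy
    linarith only [hx, hy, hz]
  have hmono : ∀ i j : ℕ, i ≤ j → s^j * N ≤ s^i * N := by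
    intro i j hij
    exact mul_le_mul_of_nonneg_right (pow_le_pow_of_le_one hs0.le hs_le1 hij) hN0.le
  have h5 : 3 ≤ s^5 * N := le_trans h6 (hmono 5 6 (by norm_num))
  have h4 : 3 ≤ s^4 * N := le_trans h6 (hmono 4 6 (by norm_num))
  have h3 : 3 ≤ s^3 * N := le_trans h6 (hmono 3 6 (by norm_num))
  have h2 : 3 ≤ s^2 * N := le_trans h6 (hmono 2 6 (by norm_num))
  have h1 : 3 ≤ s * N := by
    have h1' := le_trans h6 (hmono 1 6 (by norm_num))
    linarith only [h1']
  have hμnn : (0:ℝ) ≤ μ := by linarith only [hμ1, h2]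
  have hμ1' : (1:ℝ) ≤ μ := by linarith only [hμ1, h2]
  have hκnn : (0:ℝ) ≤ κ := by linarith only [hκ1, h1]
  have hωle : ω ≤ N * (1 - s^2) := by rw [hω]; linarith only [hμ1]
  have hsN_nn : (0:ℝ) ≤ s * N := by positivity
  have he1 := mul_le_mul_of_nonneg_right hs2 hsN_nn
  have he2 := mul_le_mul_of_nonneg_right hs2 hN0.le
  have hωnn : (0:ℝ) ≤ ω := by
    rw [hω]
    linarith only [he1, he2, h1, hμ2]
  -- individual bounds
  have hb1 : ω * (ω - 1) ≤ (N * (1 - s^2))^2 := by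
    have h := mul_le_mul hωle hωle hωnn (hωnn.trans hωle)
    linarith only [h, hωnn]
  have hμκ : μ + κ ≤ s * N * (1 + s + s^4) := by linarith only [hμ2, hκ2, h5]
  have hμκnn : (0:ℝ) ≤ μ + κ := by linarith only [hμnn, hκnn]
  have hb2 : (μ + κ) * ((μ + κ) - 1) ≤ (s * N * (1 + s + s^4))^2 := by
    have h := mul_le_mul hμκ hμκ hμκnn (hμκnn.trans hμκ)
    linarith only [h, hμκnn]
  have hκle : κ ≤ s * N * (1 + s^4) := by linarith only [hκ2, h5]
  have hb3 : κ * (κ - 1) ≤ (s * N * (1 + s^4))^2 := by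
    have h := mul_le_mul hκle hκle hκnn (hκnn.trans hκle)
    linarith only [h, hκnn]
  have hμle : μ ≤ s^2 * N * (1 + s^4) := by linarith only [hμ2, h6]
  have hb4 : μ * (μ - 1) ≤ (s^2 * N * (1 + s^4))^2 := by
    have h := mul_le_mul hμle hμle hμnn (hμnn.trans hμle)
    linarith only [h, hμnn]
  have hs4le : s^4 ≤ s := hkey 4 (by norm_num)
  have hb5 : (s*N) * ((s*N) * (1 - s^4)) ≤ κ * (κ - 1) := by
    have hlow : (s*N) * (1 - s^4) ≤ κ - 1 := by linarith only [hκ1, h5]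
    have hnn : (0:ℝ) ≤ (s*N) * (1 - s^4) :=
      mul_nonneg hsN_nn (by linarith only [hs4le, hs2])
    exact mul_le_mul hκ1 hlow hnn hκnn
  have hb6 : N * (N * (1 - s^4)) ≤ N * (N - 1) := by
    have : N * (1 - s^4) ≤ N - 1 := by linarith only [h4]
    exact mul_le_mul_of_nonneg_left this hN0.le
  have hb7 : (s*N) * (N * (1 - s - s^2 - s^3)) ≤ κ * (ω - κ) := by
    have hlow : N * (1 - s - s^2 - s^3) ≤ ω - κ := by
      rw [hω]
      linarith only [hμ2, hκ2, h3]
    have hnn : (0:ℝ) ≤ N * (1 - s - s^2 - s^3) := by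
      apply mul_nonneg hN0.le
      have q2 := hkey 2 (by norm_num)
      have q3 := hkey 3 (by norm_num)
      linarith only [q2, q3, hs2]
    exact mul_le_mul hκ1 hlow hnn hκnn
  -- one-variable inequality
  have hQnn : (0:ℝ) ≤ 1 - 2*s - (9/2)*s^2 - 2*s^3 + (1/2)*s^4 - (3/2)*s^6 + s^7
      - (5/2)*s^8 - s^9 - (5/2)*s^10 - (7/2)*s^12 - 2*s^14 - 2*s^16
      - (1/2)*s^18 - (1/2)*s^20 := by
    have k2 := hkey 2 (by norm_num)
    have k3 := hkey 3 (by norm_num)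
    have k6 := hkey 6 (by norm_num)
    have k8 := hkey 8 (by norm_num)
    have k9 := hkey 9 (by norm_num)
    have k10 := hkey 10 (by norm_num)
    have k12 := hkey 12 (by norm_num)
    have k14 := hkey 14 (by norm_num)
    have k16 := hkey 16 (by norm_num)
    have k18 := hkey 18 (by norm_num)
    have k20 := hkey 20 (by norm_num)
    have p4 : (0:ℝ) ≤ s^4 := by positivity
    have p7 : (0:ℝ) ≤ s^7 := by positivity
    linarith only [k2, k3, k6, k8, k9, k10, k12, k14, k16, k18, k20, p4, p7, hs2, hs0.le]
  have h1var : s^2*(1-s^2)^2*(1+s+s^4)^2*(1+s^2)/2 + s^6*(1+s^4)^4*(1+s^2)/2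
      ≤ s^2*(1-s^4)^2/2 + s^3*(1-s-s^2-s^3)*(1+2*s) := by
    linarith only [mul_nonneg (pow_nonneg hs0.le 4) hQnn]
  -- assembly
  have hsqnn : (0:ℝ) ≤ (1 + s^2)/2 := by positivity
  have hL1 : ω*(ω-1)*((μ+κ)*((μ+κ)-1)) ≤ (N*(1-s^2))^2 * (s*N*(1+s+s^4))^2 := by
    apply mul_le_mul hb1 hb2 ?_ (by positivity)
    apply mul_nonneg hμκnn
    linarith only [hμnn, hκ1, h1]
  have hL2 : κ*(κ-1)*(μ*(μ-1)) ≤ (s*N*(1+s^4))^2 * (s^2*N*(1+s^4))^2 := by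
    apply mul_le_mul hb3 hb4 ?_ (by positivity)
    apply mul_nonneg hμnn
    linarith only [hμ1']
  have hL1' := mul_le_mul_of_nonneg_right hL1 hsqnn
  have hL2' := mul_le_mul_of_nonneg_right hL2 hsqnn
  have hR1' : (s*N)*((s*N)*(1-s^4)) * (N*(N*(1-s^4))) * (1/2)
      ≤ κ*(κ-1)*(N*(N-1)) * (1/2) := by
    apply mul_le_mul_of_nonneg_right ?_ (by norm_num)
    apply mul_le_mul hb5 hb6 ?_ ?_
    · apply mul_nonneg hN0.le
      apply mul_nonneg hN0.le
      linarith only [hs4le, hs2]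
    · have hnn : (0:ℝ) ≤ (s*N) * ((s*N) * (1 - s^4)) := by
        apply mul_nonneg hsN_nn
        apply mul_nonneg hsN_nn
        linarith only [hs4le, hs2]
      linarith only [hnn, hb5]
  have hR2' := mul_le_mul_of_nonneg_right hb7 (show (0:ℝ) ≤ s^2*N^2*(1+2*s) by positivity)
  have h1varN := mul_le_mul_of_nonneg_left h1var (show (0:ℝ) ≤ N^4 by positivity)
  linarith only [hL1', hL2', hR1', hR2', h1varN]


end Aux

open Finset in
set_option maxHeartbeats 1600000 in
/-- For `0 < a < 1`, for all small enough `ε` and large enough `n`: if a graph `G` on `n`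
vertices has density `p ≥ n^(-a)` and every `t ≥ ε n` vertices span at most
`(t choose 2) p (1+ε)` edges, then every vertex set `U` of size `⌈ε n⌉` has at most
`ε n² p (1 + 2√ε)` edges to its complement. -/
theorem stmt8 :
    ∀ a : ℝ, 0 < a → a < 1 → ∃ ε₀ : ℝ, 0 < ε₀ ∧ ∀ ε : ℝ, 0 < ε → ε < ε₀ →
      ∃ n₀ : ℕ, ∀ n : ℕ, n₀ ≤ n → ∀ G : SimpleGraph (Fin n), ∀ p : ℝ,
        p = (edgesOn G Finset.univ : ℝ) / (n.choose 2 : ℝ) →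
        (n : ℝ) ^ (-a) ≤ p →
        (∀ t : Finset (Fin n), ε * (n : ℝ) ≤ (t.card : ℝ) →
          (edgesOn G t : ℝ) ≤ (t.card.choose 2 : ℝ) * p * (1 + ε)) →
        ∀ U : Finset (Fin n), U.card = ⌈ε * (n : ℝ)⌉₊ →
          (edgesBetween G U Uᶜ : ℝ) ≤ ε * (n : ℝ) ^ 2 * p * (1 + 2 * Real.sqrt ε) := by
  intro a ha0 ha1
  refine ⟨1/10000, by norm_num, ?_⟩
  intro ε hε0 hε1
  set s := Real.sqrt ε with hsdef
  have hs0 : 0 < s := Real.sqrt_pos.2 hε0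
  have hsq : s ^ 2 = ε := Real.sq_sqrt hε0.le
  have hs2 : s ≤ 1/100 := by nlinarith [hsq, hs0]
  have hs_le1 : s ≤ 1 := by linarith
  rw [← hsq] at hε1 ⊢
  refine ⟨max 3 ⌈(1/s)^9⌉₊, ?_⟩
  intro n hn G p hp hpn hH U hU
  have hn3 : 3 ≤ n := le_trans (le_max_left _ _) hn
  set N := (n : ℝ) with hNdef
  have hN0 : (0:ℝ) < N := by
    have : (3:ℝ) ≤ N := by rw [hNdef]; exact_mod_cast hn3
    linarith
  have hNceil : ((1/s)^9 : ℝ) ≤ N := by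
    refine le_trans (Nat.le_ceil _) ?_
    rw [hNdef]
    exact_mod_cast le_trans (le_max_right _ _) hn
  have hN9 : 1 ≤ s^9 * N := by
    have h9' : s^9 * (1/s)^9 = 1 := by field_simp
    have h0 := mul_le_mul_of_nonneg_left hNceil (pow_nonneg hs0.le 9)
    linarith only [h9', h0]
  -- power facts
  have hs3small : s^3 ≤ 1/1000000 := by
    calc s^3 ≤ (1/100)^3 := pow_le_pow_left₀ hs0.le hs2 3
    _ = 1/1000000 := by norm_num
  have h6 : 3 ≤ s^6 * N := by
    have hx : 1 ≤ s^3 * (s^6 * N) := by linarith only [hN9]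
    have hy : (0:ℝ) ≤ s^6 * N := by positivity
    have hz := mul_le_mul_of_nonneg_right hs3small hy
    linarith only [hx, hy, hz]
  have hmono : ∀ i j : ℕ, i ≤ j → s^j * N ≤ s^i * N := by
    intro i j hij
    exact mul_le_mul_of_nonneg_right (pow_le_pow_of_le_one hs0.le hs_le1 hij) hN0.le
  have h3 : 3 ≤ s^3 * N := le_trans h6 (hmono 3 6 (by norm_num))
  have h2 : 3 ≤ s^2 * N := le_trans h6 (hmono 2 6 (by norm_num))
  have h1 : 3 ≤ s * N := by
    have h1' := le_trans h6 (hmono 1 6 (by norm_num))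
    linarith only [h1']
  have hp0 : 0 < p := lt_of_lt_of_le (Real.rpow_pos_of_pos hN0 (-a)) hpn
  -- sizes
  have hμ1 : s^2 * N ≤ (U.card : ℝ) := by rw [hU]; exact Nat.le_ceil _
  have hμ2 : (U.card : ℝ) ≤ s^2 * N + 1 := by
    rw [hU]; exact (Nat.ceil_lt_add_one (by positivity)).le
  set k := ⌈s * N⌉₊ with hkdef
  have hκ1 : s * N ≤ (k : ℝ) := Nat.le_ceil _
  have hκ2 : (k : ℝ) ≤ s * N + 1 := (Nat.ceil_lt_add_one (by positivity)).le
  have hk2 : 2 ≤ k := by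
    have : (2:ℝ) ≤ (k:ℝ) := by linarith only [h1, hκ1]
    exact_mod_cast this
  -- μ + κ + 1 ≤ N
  have hsN_nn : (0:ℝ) ≤ s * N := by positivity
  have he1 := mul_le_mul_of_nonneg_right hs2 hsN_nn
  have he2 := mul_le_mul_of_nonneg_right hs2 hN0.le
  have he3 := mul_le_mul_of_nonneg_right hs2 (mul_nonneg (mul_nonneg hs0.le hs0.le) hN0.le)
  have he4 := mul_le_mul_of_nonneg_right hs3small hN0.le
  have hsmall : (U.card : ℝ) + (k : ℝ) + 1 ≤ N := by
    linarith only [hμ2, hκ2, he1, he2, h3, he4, hN0]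
  have hun : U.card < n := by
    have hkc : (0:ℝ) ≤ (k:ℝ) := Nat.cast_nonneg k
    have : (U.card : ℝ) < N := by linarith only [hsmall, hkc]
    rw [hNdef] at this
    exact_mod_cast this
  set w := Uᶜ.card with hwdef
  have hw_eq : w = n - U.card := by
    rw [hwdef, Finset.card_compl, Fintype.card_fin]
  have hωcast : (w : ℝ) = N - (U.card : ℝ) := by
    rw [hw_eq, hNdef]
    push_cast [Nat.cast_sub hun.le]
    ring
  have hkw : k + 1 ≤ w := by
    have hnat : k + 1 + U.card ≤ n := by
      have hr : ((k + 1 + U.card : ℕ) : ℝ) ≤ N := by push_cast; linarith only [hsmall]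
      rw [hNdef] at hr
      exact_mod_cast hr
    omega
  have hklew : k ≤ w := by omega
  have hw1 : 1 ≤ w := by omega
  -- abbreviations
  set eU := (edgesOn G U : ℝ) with heUdef
  set eW := (edgesOn G Uᶜ : ℝ) with heWdef
  set m := (edgesBetween G U Uᶜ : ℝ) with hmdef
  set μ := (U.card : ℝ) with hμdef
  set κ := (k : ℝ) with hκdef
  set ω := (w : ℝ) with hωdef
  -- hypothesis applications
  have heU_le : eU ≤ (μ * (μ - 1) / 2) * p * (1 + s^2) := by
    have := hH U hμ1
    rwa [Nat.cast_choose_two] at this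
  have h_each : ∀ T ∈ Finset.powersetCard k Uᶜ,
      (edgesOn G (U ∪ T) : ℝ) ≤ ((μ + κ) * ((μ + κ) - 1) / 2) * p * (1 + s^2) := by
    intro T hT
    rw [Finset.mem_powersetCard] at hT
    have hdisj : Disjoint U T :=
      Finset.disjoint_left.2 fun {x} hxU hxT => (Finset.mem_compl.1 (hT.1 hxT)) hxU
    have hcard : (U ∪ T).card = U.card + k := by
      rw [Finset.card_union_of_disjoint hdisj, hT.2]
    have hc : s^2 * N ≤ ((U ∪ T).card : ℝ) := by
      rw [hcard]; push_cast
      have hkc : (0:ℝ) ≤ κ := Nat.cast_nonneg k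
      linarith only [hμ1, hkc]
    have := hH (U ∪ T) hc
    rwa [hcard, Nat.cast_choose_two, Nat.cast_add] at this
  -- master inequality
  have hms : ((w.choose k : ℕ) : ℝ) * eU + (((w-1).choose (k-1) : ℕ) : ℝ) * m
      + (((w-2).choose (k-2) : ℕ) : ℝ) * eW
      ≤ ((w.choose k : ℕ) : ℝ) * (((μ + κ) * ((μ + κ) - 1) / 2) * p * (1 + s^2)) := by
    have hcast : ((w.choose k * edgesOn G U + (w-1).choose (k-1) * edgesBetween G U Uᶜ
        + (w-2).choose (k-2) * edgesOn G Uᶜ : ℕ) : ℝ)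
        = ((w.choose k : ℕ) : ℝ) * eU + (((w-1).choose (k-1) : ℕ) : ℝ) * m
          + (((w-2).choose (k-2) : ℕ) : ℝ) * eW := by
      push_cast [heUdef, hmdef, heWdef]
      ring
    rw [← hcast, ← master G U k hk2]
    calc ((∑ T ∈ Finset.powersetCard k Uᶜ, edgesOn G (U ∪ T) : ℕ) : ℝ)
        = ∑ T ∈ Finset.powersetCard k Uᶜ, (edgesOn G (U ∪ T) : ℝ) := by push_cast; rfl
      _ ≤ ∑ _T ∈ Finset.powersetCard k Uᶜ, ((μ + κ) * ((μ + κ) - 1) / 2) * p * (1 + s^2) :=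
          Finset.sum_le_sum h_each
      _ = ((Finset.powersetCard k Uᶜ).card : ℝ)
            * (((μ + κ) * ((μ + κ) - 1) / 2) * p * (1 + s^2)) := by
          rw [Finset.sum_const, nsmul_eq_mul]
      _ = ((w.choose k : ℕ) : ℝ) * (((μ + κ) * ((μ + κ) - 1) / 2) * p * (1 + s^2)) := by
          rw [Finset.card_powersetCard]
  -- total count
  have hE' : (edgesOn G Finset.univ : ℝ) = p * (N * (N-1) / 2) := by
    have hch : ((n.choose 2 : ℕ) : ℝ) = N * (N - 1) / 2 := by
      rw [Nat.cast_choose_two, hNdef]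
    have hchpos : (0:ℝ) < ((n.choose 2 : ℕ) : ℝ) := by
      have : 0 < n.choose 2 := Nat.choose_pos (by omega)
      exact_mod_cast this
    rw [hp, ← hch]
    field_simp
  have htot : p * (N * (N-1) / 2) = eU + m + eW := by
    rw [← hE', heUdef, hmdef, heWdef]
    exact_mod_cast congrArg (fun x : ℕ => (x : ℝ)) (total_split G U)
  have heW_eq : eW = p * (N * (N-1) / 2) - eU - m := by linarith only [htot]
  -- binomial identities over ℝ
  have idI : κ * (ω - κ) * ((w.choose k : ℕ) : ℝ)
      = ω * (ω - 1) * (((w-2).choose (k-1) : ℕ) : ℝ) := by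
    have hnat := binom_id1 hk2 hkw
    have hcast : ((k * ((w - k) * w.choose k) : ℕ) : ℝ)
        = ((w * ((w - 1) * ((w - 2).choose (k - 1))) : ℕ) : ℝ) := by exact_mod_cast hnat
    push_cast [Nat.cast_sub hklew, Nat.cast_sub hw1] at hcast
    rw [hκdef, hωdef]
    linarith only [hcast]
  have idII : (ω - κ) * (((w-2).choose (k-2) : ℕ) : ℝ)
      = (κ - 1) * (((w-2).choose (k-1) : ℕ) : ℝ) := by
    have hnat := binom_id2 hk2 hkw
    have hcast : (((w - k) * ((w - 2).choose (k - 2)) : ℕ) : ℝ)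
        = (((k - 1) * ((w - 2).choose (k - 1)) : ℕ) : ℝ) := by exact_mod_cast hnat
    push_cast [Nat.cast_sub hklew, Nat.cast_sub (show 1 ≤ k by omega)] at hcast
    rw [hκdef, hωdef]
    linarith only [hcast]
  have idIIIm : (((w-1).choose (k-1) : ℕ) : ℝ) * m
      = (((w-2).choose (k-2) : ℕ) : ℝ) * m + (((w-2).choose (k-1) : ℕ) : ℝ) * m := by
    have hnat := binom_id3 hk2 hkw
    have hcc : (((w-1).choose (k-1) : ℕ) : ℝ)
        = (((w-2).choose (k-2) : ℕ) : ℝ) + (((w-2).choose (k-1) : ℕ) : ℝ) := by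
      exact_mod_cast hnat
    rw [hcc]; ring
  have hc3 : (0:ℝ) < (((w-2).choose (k-1) : ℕ) : ℝ) := by
    exact_mod_cast binom_pos hk2 hkw
  have hc2nn : (0:ℝ) ≤ (((w-2).choose (k-2) : ℕ) : ℝ) := Nat.cast_nonneg _
  have hc0nn : (0:ℝ) ≤ ((w.choose k : ℕ) : ℝ) := Nat.cast_nonneg _
  have heUnn : (0:ℝ) ≤ eU := by rw [heUdef]; exact Nat.cast_nonneg _
  -- step 1
  rw [heW_eq] at hms
  have step1 : (((w-2).choose (k-1) : ℕ) : ℝ) * m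
      ≤ ((w.choose k : ℕ) : ℝ) * (((μ + κ) * ((μ + κ) - 1) / 2) * p * (1 + s^2))
        + (((w-2).choose (k-2) : ℕ) : ℝ)
          * ((μ * (μ - 1) / 2) * p * (1 + s^2) - p * (N * (N-1) / 2)) := by
    have hmul1 : (((w-2).choose (k-2) : ℕ) : ℝ) * eU
        ≤ (((w-2).choose (k-2) : ℕ) : ℝ) * ((μ * (μ - 1) / 2) * p * (1 + s^2)) :=
      mul_le_mul_of_nonneg_left heU_le hc2nn
    have hmul2 : (0:ℝ) ≤ ((w.choose k : ℕ) : ℝ) * eU := mul_nonneg hc0nn heUnn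
    linarith only [hms, idIIIm, hmul1, hmul2]
  -- numeric core
  have hωcast' : ω = N - μ := by rw [hωdef, hμdef]; exact hωcast
  have hFcore := analytic_core hs0 hs2 hN9 hN0 hμ1 hμ2 hκ1 hκ2 hωcast'
  have hFp : ω * (ω - 1) * (((μ + κ) * ((μ + κ) - 1) / 2) * p * (1 + s^2))
      + κ * (κ - 1) * ((μ * (μ - 1) / 2) * p * (1 + s^2) - p * (N * (N-1) / 2))
      ≤ κ * (ω - κ) * (s^2 * N^2 * p * (1 + 2*s)) := by
    have hmul := mul_le_mul_of_nonneg_right hFcore hp0.le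
    linarith only [hmul]
  have hκωpos : (0:ℝ) < κ * (ω - κ) := by
    have hωκ : (1:ℝ) ≤ ω - κ := by
      have hr : ((k:ℝ) + 1) ≤ (w:ℝ) := by exact_mod_cast hkw
      rw [hκdef, hωdef]; linarith only [hr]
    have hκpos : (0:ℝ) < κ := by
      rw [hκdef]
      have : (0:ℝ) < (2:ℝ) := by norm_num
      have h2k : (2:ℝ) ≤ (k:ℝ) := by exact_mod_cast hk2
      linarith only [h2k]
    exact mul_pos hκpos (by linarith only [hωκ])
  have step2 : ((w.choose k : ℕ) : ℝ) * (((μ + κ) * ((μ + κ) - 1) / 2) * p * (1 + s^2))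
      + (((w-2).choose (k-2) : ℕ) : ℝ)
        * ((μ * (μ - 1) / 2) * p * (1 + s^2) - p * (N * (N-1) / 2))
      ≤ (((w-2).choose (k-1) : ℕ) : ℝ) * (s^2 * N^2 * p * (1 + 2*s)) := by
    apply le_of_mul_le_mul_left ?_ hκωpos
    have heq : κ * (ω - κ)
        * (((w.choose k : ℕ) : ℝ) * (((μ + κ) * ((μ + κ) - 1) / 2) * p * (1 + s^2))
          + (((w-2).choose (k-2) : ℕ) : ℝ)
            * ((μ * (μ - 1) / 2) * p * (1 + s^2) - p * (N * (N-1) / 2)))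
        = (((w-2).choose (k-1) : ℕ) : ℝ)
          * (ω * (ω - 1) * (((μ + κ) * ((μ + κ) - 1) / 2) * p * (1 + s^2))
            + κ * (κ - 1) * ((μ * (μ - 1) / 2) * p * (1 + s^2) - p * (N * (N-1) / 2))) := by
      linear_combination (((μ + κ) * ((μ + κ) - 1) / 2) * p * (1 + s^2)) * idI
        + ((μ * (μ - 1) / 2) * p * (1 + s^2) - p * (N * (N-1) / 2)) * κ * idII
    rw [heq]
    have hmul := mul_le_mul_of_nonneg_left hFp hc3.le
    linarith only [hmul]
  -- conclude
  have hfin : (((w-2).choose (k-1) : ℕ) : ℝ) * m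
      ≤ (((w-2).choose (k-1) : ℕ) : ℝ) * (s^2 * N^2 * p * (1 + 2*s)) :=
    le_trans step1 step2
  have hres : m ≤ s^2 * N^2 * p * (1 + 2*s) := le_of_mul_le_mul_left hfin hc3
  linarith only [hres]
end
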